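/- For every natural number n, three times the number of pairs (A,B) of Finsets of Fin(n+1) satisfying A ≼ B and A.card + B.card = 3 equals n·(n+1)·(2n+1); that is, the number of 2-simplices of the standard cylinder Cil Γ₊[n] equals n(n+1)(2n+1)/3 (sequence A006331). -/

import Mathlib

open Finset

lemma two_mul_choose_two : ∀ m : ℕ, 2 * Nat.choose (m + 1) 2 = m * (m + 1)
  | 0 => rfl
  | m + 1 => by
    have := two_mul_choose_two m
    rw [show m + 1 + 1 = (m + 1) + 1 from rfl, Nat.choose_succ_succ (m+1) 1,
      Nat.choose_one_right]
    nlinarith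

lemma sum_choose_two : ∀ m : ℕ,
    ∑ i ∈ range m, Nat.choose (i + 1) 2 = Nat.choose (m + 1) 3
  | 0 => rfl
  | m + 1 => by
    rw [Finset.sum_range_succ, sum_choose_two m, Nat.choose_succ_succ (m+1) 2]
    simp only [show Nat.succ 2 = 3 from rfl]
    omega

lemma six_choose (n : ℕ) :
    6 * Nat.choose (n + 1) 3 + 6 * Nat.choose (n + 2) 3 = n * (n + 1) * (2 * n + 1) := by
  induction n with
  | zero => rfl
  | succ m ih =>
    have h2 := two_mul_choose_two (m + 1)
    rw [show m + 1 + 2 = (m + 2) + 1 from rfl, Nat.choose_succ_succ (m+2) 2] at *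
    rw [show m + 1 + 1 = (m + 1) + 1 from rfl, Nat.choose_succ_succ (m+1) 2] at *
    simp only [show Nat.succ 2 = 3 from rfl] at *
    have h1 := two_mul_choose_two m
    nlinarith

theorem cyl_two_simplices_A006331 (n : ℕ) :
    3 * Nat.card {AB : Finset (Fin (n + 1)) × Finset (Fin (n + 1)) //
        ((AB.1 ∩ AB.2).card ≤ 1 ∧ ∀ a ∈ AB.1, ∀ b ∈ AB.2, a ≤ b) ∧
          AB.1.card + AB.2.card = 3} =
      n * (n + 1) * (2 * n + 1) := by
  classical
  have hcard : Nat.card {AB : Finset (Fin (n + 1)) × Finset (Fin (n + 1)) //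
        ((AB.1 ∩ AB.2).card ≤ 1 ∧ ∀ a ∈ AB.1, ∀ b ∈ AB.2, a ≤ b) ∧
          AB.1.card + AB.2.card = 3} =
      (univ.filter (fun AB : Finset (Fin (n + 1)) × Finset (Fin (n + 1)) =>
        (∀ a ∈ AB.1, ∀ b ∈ AB.2, a ≤ b) ∧ AB.1.card + AB.2.card = 3)).card := by
    rw [Nat.card_eq_fintype_card, Fintype.card_subtype]
    apply congrArg Finset.card
    apply Finset.filter_congr
    intro AB _
    constructor
    · rintro ⟨⟨_, h⟩, hs⟩; exact ⟨h, hs⟩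
    · rintro ⟨h, hs⟩
      have h1 := Finset.card_le_card (Finset.inter_subset_left (s₂ := AB.2) (s₁ := AB.1))
      have h2 := Finset.card_le_card (Finset.inter_subset_right (s₂ := AB.2) (s₁ := AB.1))
      exact ⟨⟨by omega, h⟩, hs⟩
  rw [hcard]
  set F := (univ.filter (fun AB : Finset (Fin (n + 1)) × Finset (Fin (n + 1)) =>
        (∀ a ∈ AB.1, ∀ b ∈ AB.2, a ≤ b) ∧ AB.1.card + AB.2.card = 3)) with hF
  have hfib : F.card = ∑ k ∈ range 4, (F.filter (fun AB => AB.1.card = k)).card := by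
    apply Finset.card_eq_sum_card_fiberwise
    intro AB hAB
    simp only [hF, coe_filter, mem_coe, mem_univ, true_and, Set.mem_setOf_eq] at hAB
    simp only [coe_range, Set.mem_Iio]; omega
  have h0 : F.filter (fun AB => AB.1.card = 0) =
      ({(∅ : Finset (Fin (n+1)))} : Finset _) ×ˢ powersetCard 3 univ := by
    ext ⟨A, B⟩
    simp only [hF, mem_filter, mem_univ, true_and, mem_product, mem_singleton,
      mem_powersetCard, Finset.card_eq_zero]
    constructor
    · rintro ⟨⟨-, hs⟩, hA⟩
      exact ⟨hA, subset_univ _, by simp [hA] at hs ⊢; omega⟩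
    · rintro ⟨hA, -, hB⟩
      subst hA
      exact ⟨⟨by simp, by simpa using hB⟩, by simp⟩
  have h3 : F.filter (fun AB => AB.1.card = 3) =
      powersetCard 3 (univ : Finset (Fin (n+1))) ×ˢ ({(∅ : Finset (Fin (n+1)))} : Finset _) := by
    ext ⟨A, B⟩
    simp only [hF, mem_filter, mem_univ, true_and, mem_product, mem_singleton,
      mem_powersetCard]
    constructor
    · rintro ⟨⟨-, hs⟩, hA⟩
      have : B = ∅ := Finset.card_eq_zero.mp (by omega)
      exact ⟨⟨subset_univ _, hA⟩, this⟩
    · rintro ⟨⟨-, hA⟩, hB⟩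
      subst hB
      exact ⟨⟨by simp, by simp [hA]⟩, hA⟩
  have h1 : F.filter (fun AB => AB.1.card = 1) =
      univ.biUnion (fun a : Fin (n+1) =>
        ({({a} : Finset (Fin (n+1)))} : Finset _) ×ˢ powersetCard 2 (Ici a)) := by
    ext ⟨A, B⟩
    simp only [hF, mem_filter, mem_univ, true_and, mem_biUnion, mem_product,
      mem_singleton, mem_powersetCard]
    constructor
    · rintro ⟨⟨hle, hs⟩, hA⟩
      obtain ⟨a, rfl⟩ := Finset.card_eq_one.mp hA
      refine ⟨a, rfl, fun b hb => mem_Ici.mpr (hle a (mem_singleton_self a) b hb), by omega⟩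
    · rintro ⟨a, rfl, hsub, hB⟩
      refine ⟨⟨?_, by simp [hB]⟩, by simp⟩
      intro x hx b hb
      rw [mem_singleton] at hx
      subst hx
      exact mem_Ici.mp (hsub hb)
  have h2 : F.filter (fun AB => AB.1.card = 2) =
      univ.biUnion (fun b : Fin (n+1) =>
        powersetCard 2 (Iic b) ×ˢ ({({b} : Finset (Fin (n+1)))} : Finset _)) := by
    ext ⟨A, B⟩
    simp only [hF, mem_filter, mem_univ, true_and, mem_biUnion, mem_product,
      mem_singleton, mem_powersetCard]
    constructor
    · rintro ⟨⟨hle, hs⟩, hA⟩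
      have hB1 : B.card = 1 := by omega
      obtain ⟨b, rfl⟩ := Finset.card_eq_one.mp hB1
      exact ⟨b, ⟨fun a ha => mem_Iic.mpr (hle a ha b (mem_singleton_self b)), hA⟩, rfl⟩
    · rintro ⟨b, ⟨hsub, hA⟩, rfl⟩
      refine ⟨⟨?_, by simp [hA]⟩, hA⟩
      intro x hx y hy
      rw [mem_singleton] at hy
      subst hy
      exact mem_Iic.mp (hsub hx)
  have c0 : (F.filter (fun AB => AB.1.card = 0)).card = (n+1).choose 3 := by
    rw [h0, Finset.card_product, Finset.card_singleton, Finset.card_powersetCard,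
      Finset.card_univ, Fintype.card_fin, one_mul]
  have c3 : (F.filter (fun AB => AB.1.card = 3)).card = (n+1).choose 3 := by
    rw [h3, Finset.card_product, Finset.card_singleton, Finset.card_powersetCard,
      Finset.card_univ, Fintype.card_fin, mul_one]
  have hdisj1 : ∀ a ∈ (univ : Finset (Fin (n+1))), ∀ a' ∈ univ, a ≠ a' →
      Disjoint (({({a} : Finset (Fin (n+1)))} : Finset _) ×ˢ powersetCard 2 (Ici a))
        (({({a'} : Finset (Fin (n+1)))} : Finset _) ×ˢ powersetCard 2 (Ici a')) := by
    intro a _ a' _ hne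
    rw [Finset.disjoint_left]
    rintro ⟨A, B⟩ hx hy
    rw [mem_product, mem_singleton] at hx hy
    exact hne (Finset.singleton_injective (hx.1.symm.trans hy.1))
  have hdisj2 : ∀ a ∈ (univ : Finset (Fin (n+1))), ∀ a' ∈ univ, a ≠ a' →
      Disjoint (powersetCard 2 (Iic a) ×ˢ ({({a} : Finset (Fin (n+1)))} : Finset _))
        (powersetCard 2 (Iic a') ×ˢ ({({a'} : Finset (Fin (n+1)))} : Finset _)) := by
    intro a _ a' _ hne
    rw [Finset.disjoint_left]
    rintro ⟨A, B⟩ hx hy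
    rw [mem_product, mem_singleton] at hx hy
    exact hne (Finset.singleton_injective (hx.2.symm.trans hy.2))
  have c1 : (F.filter (fun AB => AB.1.card = 1)).card = (n+2).choose 3 := by
    rw [h1, Finset.card_biUnion hdisj1]
    have : ∀ a : Fin (n+1),
        (({({a} : Finset (Fin (n+1)))} : Finset _) ×ˢ powersetCard 2 (Ici a)).card
          = (n + 1 - (a : ℕ)).choose 2 := by
      intro a
      rw [Finset.card_product, Finset.card_singleton, Finset.card_powersetCard,
        Fin.card_Ici, one_mul]
    rw [Finset.sum_congr rfl (fun a _ => this a),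
      Fin.sum_univ_eq_sum_range (fun i => (n + 1 - i).choose 2) (n+1)]
    rw [← Finset.sum_range_reflect]
    have heq : ∀ j ∈ range (n+1),
        (n + 1 - (n - j)).choose 2 = (j + 1).choose 2 := by
      intro j hj
      rw [mem_range] at hj
      congr 1
      omega
    calc ∑ j ∈ range (n+1), (n + 1 - (n + 1 - 1 - j)).choose 2
        = ∑ j ∈ range (n+1), (j+1).choose 2 := by
          refine Finset.sum_congr rfl fun j hj => ?_
          rw [mem_range] at hj
          congr 1
          omega
      _ = (n+2).choose 3 := sum_choose_two (n+1)
  have c2 : (F.filter (fun AB => AB.1.card = 2)).card = (n+2).choose 3 := by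
    rw [h2, Finset.card_biUnion hdisj2]
    have : ∀ b : Fin (n+1),
        (powersetCard 2 (Iic b) ×ˢ ({({b} : Finset (Fin (n+1)))} : Finset _)).card
          = ((b : ℕ) + 1).choose 2 := by
      intro b
      rw [Finset.card_product, Finset.card_singleton, Finset.card_powersetCard,
        Fin.card_Iic, mul_one]
    rw [Finset.sum_congr rfl (fun b _ => this b),
      Fin.sum_univ_eq_sum_range (fun i => (i + 1).choose 2) (n+1)]
    exact sum_choose_two (n+1)
  rw [hfib]
  rw [show (4 : ℕ) = 3 + 1 from rfl, Finset.sum_range_succ, Finset.sum_range_succ,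
    Finset.sum_range_succ, Finset.sum_range_one, c0, c1, c2, c3]
  have := six_choose n
  omega
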